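/- If 𝒢 and 𝒢′ are graph sequences with 𝒢 ≃ 𝒢′ (bi-Lipschitz equivalent on the same vertex sets) and 𝒢 is hyperfinite, then 𝒢′ is hyperfinite. -/

import Mathlib

open Filter Topology

/-- A graph sequence: finite connected graphs of uniformly bounded degree whose
number of vertices tends to infinity. -/
structure GraphSeq (V : ℕ → Type*) where
  G : ∀ n, SimpleGraph (V n)
  finite : ∀ n, Finite (V n)
  connected : ∀ n, (G n).Connected
  degBound : ℕ
  deg_le : ∀ n, ∀ x : V n, ((G n).neighborSet x).ncard ≤ degBound
  card_tendsto : Tendsto (fun n => Nat.card (V n)) atTop atTop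

/-- The edge number `e(𝒢) = liminf |E(G_n)|/|V(G_n)|`. -/
noncomputable def GraphSeq.edgeNumber {V : ℕ → Type*} (Gs : GraphSeq V) : ℝ :=
  liminf (fun n => (((Gs.G n).edgeSet.ncard : ℝ)) / (Nat.card (V n) : ℝ)) atTop

/-- Bi-Lipschitz equivalence `𝒢 ≃ ℋ` of graph sequences on the same vertex sets. -/
def GraphSeq.equivSeq {V : ℕ → Type*} (Gs Hs : GraphSeq V) : Prop :=
  ∃ L : ℕ, 0 < L ∧ ∀ n, ∀ x y : V n,
    (Hs.G n).dist x y ≤ L * (Gs.G n).dist x y ∧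
    (Gs.G n).dist x y ≤ L * (Hs.G n).dist x y

/-- The (combinatorial) cost `c(𝒢) = inf { e(ℋ) : ℋ ≃ 𝒢 }`. -/
noncomputable def GraphSeq.cost {V : ℕ → Type*} (Gs : GraphSeq V) : ℝ :=
  sInf { x : ℝ | ∃ Hs : GraphSeq V, Gs.equivSeq Hs ∧ x = Hs.edgeNumber }

/-- Coarse equivalence of graph sequences: a uniform `(A,A)`-quasi-isometry levelwise. -/
def coarseEquiv {V W : ℕ → Type*} (Gs : GraphSeq V) (Hs : GraphSeq W) : Prop :=
  ∃ A : ℝ, 0 < A ∧ ∀ n, ∃ f : V n → W n,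
    (∀ x y : V n,
      ((Gs.G n).dist x y : ℝ) / A - A ≤ ((Hs.G n).dist (f x) (f y) : ℝ) ∧
      ((Hs.G n).dist (f x) (f y) : ℝ) ≤ A * ((Gs.G n).dist x y : ℝ) + A) ∧
    (∀ w : W n, ∃ x : V n, ((Hs.G n).dist (f x) w : ℝ) ≤ A)

/-- Hyperfiniteness of a family of graphs. -/
def hyperfiniteFam {V : ℕ → Type*} (G : ∀ n, SimpleGraph (V n)) : Prop :=
  ∀ ε : ℝ, 0 < ε → ∃ K : ℕ, 0 < K ∧ ∃ E : ∀ n, Set (Sym2 (V n)),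
    (∀ n, E n ⊆ (G n).edgeSet) ∧
    limsup (fun n => (((E n).ncard : ℝ)) / (Nat.card (V n) : ℝ)) atTop < ε ∧
    ∀ n, ∀ x : V n, {y | ((G n).deleteEdges (E n)).Reachable x y}.ncard ≤ K

def GraphSeq.hyperfinite {V : ℕ → Type*} (Gs : GraphSeq V) : Prop :=
  hyperfiniteFam Gs.G

/-- Property A for a family of graphs. -/
def propertyAFam {V : ℕ → Type*} (G : ∀ n, SimpleGraph (V n)) : Prop :=
  ∀ ε : ℝ, 0 < ε → ∃ S : ℕ, 0 < S ∧ ∀ n, ∃ ξ : V n → V n → ℝ,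
    (∀ x, ∑ᶠ y, |ξ x y| = 1) ∧
    (∀ x y, ξ x y ≠ 0 → (G n).dist x y ≤ S) ∧
    (∀ x y, (G n).Adj x y → ∑ᶠ z, |ξ x z - ξ y z| < ε)

def GraphSeq.propertyA {V : ℕ → Type*} (Gs : GraphSeq V) : Prop :=
  propertyAFam Gs.G

/-- Property almost-A: one may delete a vanishing proportion of vertices to get property A. -/
def GraphSeq.almostA {V : ℕ → Type*} (Gs : GraphSeq V) : Prop :=
  ∃ V' : ∀ n, Set (V n),
    Tendsto (fun n => (((V' n).ncard : ℝ)) / (Nat.card (V n) : ℝ)) atTop (𝓝 0) ∧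
    propertyAFam (fun n => (Gs.G n).induce ((V' n)ᶜ))

/-- The set of edges of `G` with exactly one endpoint in `F`. -/
def edgeBoundary {V : Type*} (G : SimpleGraph V) (F : Set V) : Set (Sym2 V) :=
  {e | e ∈ G.edgeSet ∧ ∃ x y, e = s(x, y) ∧ x ∈ F ∧ y ∉ F}

/-- The Cayley graph of a group with respect to a set `S`. -/
def cayleyGraph (Γ : Type*) [Group Γ] (S : Set Γ) : SimpleGraph Γ :=
  SimpleGraph.fromRel (fun x y => ∃ s ∈ S, y = x * s)

/-- The simple graph underlying an `S`-labelled graph given by label maps `lab`. -/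
def labGraph {Γ V : Type*} (S : Set Γ) (lab : Γ → V → V) : SimpleGraph V :=
  SimpleGraph.fromRel (fun x y => ∃ s ∈ S, y = lab s x)

/-- Right multiplication by `s` on the right cosets of `H`. -/
def schreierMul {Γ : Type*} [Group Γ] (H : Subgroup Γ) (s : Γ) :
    Quotient (QuotientGroup.rightRel H) → Quotient (QuotientGroup.rightRel H) :=
  Quotient.map (fun g => g * s) (fun a b hab => by
    have h := (QuotientGroup.rightRel_apply).mp hab
    exact (QuotientGroup.rightRel_apply).mpr (by
      simpa [mul_assoc] using h))

/-- The Schreier graph `Sch(Γ, H, S)` on the right cosets of `H`. -/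
def schreierGraph {Γ : Type*} [Group Γ] (H : Subgroup Γ) (S : Set Γ) :
    SimpleGraph (Quotient (QuotientGroup.rightRel H)) :=
  labGraph S (fun s => schreierMul H s)

/-- The rooted labelled `r`-ball of the labelled graph `lab` at `x` is isomorphic to
the `r`-ball around the identity in `Cay(Γ, S)`. -/
def ballIso {Γ : Type*} [Group Γ] (S : Set Γ) {V : Type*} (lab : Γ → V → V)
    (x : V) (r : ℕ) : Prop :=
  ∃ f : Γ → V, f 1 = x ∧
    (∀ g g' : Γ, (cayleyGraph Γ S).dist 1 g ≤ r → (cayleyGraph Γ S).dist 1 g' ≤ r →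
      f g = f g' → g = g') ∧
    (∀ g : Γ, (cayleyGraph Γ S).dist 1 g < r → ∀ s ∈ S, f (g * s) = lab s (f g)) ∧
    (∀ v : V, (labGraph S lab).dist x v ≤ r →
      ∃ g : Γ, (cayleyGraph Γ S).dist 1 g ≤ r ∧ f g = v)

/-- Benjamini–Schramm convergence of the `S`-labelled graphs given by `lab` to `Cay(Γ, S)`. -/
def BSConv {Γ : Type*} [Group Γ] (S : Set Γ) {V : ℕ → Type*}
    (lab : ∀ n, Γ → V n → V n) : Prop :=
  ∀ r : ℕ, Tendsto
    (fun n => ((Nat.card {x : V n // ballIso S (lab n) x r} : ℝ)) / (Nat.card (V n) : ℝ))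
    atTop (𝓝 1)

/-- A sofic approximation of `Γ`: a graph sequence labelled by `S` which
Benjamini–Schramm converges to `Cay(Γ, S)`. -/
def IsSoficApprox {Γ : Type*} [Group Γ] (S : Set Γ) {V : ℕ → Type*} (Gs : GraphSeq V)
    (lab : ∀ n, Γ → V n → V n) : Prop :=
  (∀ n, Gs.G n = labGraph S (lab n)) ∧ BSConv S lab

/-- Amenability via Følner sets with respect to the generating set `S`. -/
def FolnerAmenable {Γ : Type*} [Group Γ] (S : Set Γ) : Prop :=
  ∀ ε : ℝ, 0 < ε → ∃ F : Set Γ, F.Finite ∧ F.Nonempty ∧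
    ∀ g ∈ S, ((symmDiff ((fun x => g * x) '' F) F).ncard : ℝ) < ε * (F.ncard : ℝ)

section Aux

lemma aux_ncard_biUnion_le {α β : Type*} [Finite β] {s : Set α} (hs : s.Finite)
    (f : α → Set β) (m : ℕ) :
    (∀ a ∈ s, (f a).ncard ≤ m) → (⋃ a ∈ s, f a).ncard ≤ s.ncard * m := by
  refine Set.Finite.induction_on
    (motive := fun s _ => (∀ a ∈ s, (f a).ncard ≤ m) → (⋃ a ∈ s, f a).ncard ≤ s.ncard * m)
    s hs (by simp) ?_
  intro a s' ha hs' ih hf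
  rw [Set.biUnion_insert]
  calc (f a ∪ ⋃ x ∈ s', f x).ncard ≤ (f a).ncard + (⋃ x ∈ s', f x).ncard :=
        Set.ncard_union_le _ _
    _ ≤ m + s'.ncard * m :=
        add_le_add (hf a (Set.mem_insert _ _))
          (ih fun b hb => hf b (Set.mem_insert_of_mem _ hb))
    _ = (insert a s').ncard * m := by
        rw [Set.ncard_insert_of_notMem ha hs', add_mul, one_mul, add_comm]

lemma aux_ball_ncard {α : Type*} [Finite α] (G : SimpleGraph α) (d : ℕ)
    (hd : ∀ x : α, (G.neighborSet x).ncard ≤ d) :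
    ∀ (r : ℕ) (u : α), {v | G.Reachable u v ∧ G.dist u v ≤ r}.ncard ≤ (d + 1) ^ r := by
  intro r
  induction r with
  | zero =>
    intro u
    have hsub : {v | G.Reachable u v ∧ G.dist u v ≤ 0} ⊆ {u} := by
      rintro v ⟨hr, hd0⟩
      rcases SimpleGraph.dist_eq_zero_iff_eq_or_not_reachable.mp (Nat.le_zero.mp hd0) with
        hvu | hvu
      · simp [hvu]
      · exact absurd hr hvu
    calc {v | G.Reachable u v ∧ G.dist u v ≤ 0}.ncard
        ≤ ({u} : Set α).ncard := Set.ncard_le_ncard hsub (Set.toFinite _)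
      _ = 1 := Set.ncard_singleton u
      _ ≤ (d + 1) ^ 0 := by simp
  | succ r ih =>
    intro u
    have hsub : {v | G.Reachable u v ∧ G.dist u v ≤ r + 1} ⊆
        ⋃ w ∈ {v | G.Reachable u v ∧ G.dist u v ≤ r}, insert w (G.neighborSet w) := by
      rintro v ⟨hr, hdist⟩
      by_cases hle : G.dist u v ≤ r
      · exact Set.mem_biUnion (show _ ∈ {v | G.Reachable u v ∧ G.dist u v ≤ r} from ⟨hr, hle⟩)
          (Set.mem_insert _ _)
      · have hne : G.dist v u ≠ 0 := by
          rw [SimpleGraph.dist_comm]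
          omega
        obtain ⟨p, hp⟩ := SimpleGraph.exists_walk_of_dist_ne_zero hne
        cases p with
        | nil => simp at hne
        | cons hadj q =>
          rename_i w
          simp only [SimpleGraph.Walk.length_cons] at hp
          have hqd : G.dist u w ≤ r := by
            have h1 : G.dist w u ≤ q.length := SimpleGraph.dist_le q
            have h2 : G.dist v u = G.dist u v := SimpleGraph.dist_comm
            rw [SimpleGraph.dist_comm]
            omega
          exact Set.mem_biUnion
            (show w ∈ {v | G.Reachable u v ∧ G.dist u v ≤ r} from
              ⟨q.reverse.reachable, hqd⟩)
            (Set.mem_insert_of_mem _ (hadj.symm : v ∈ G.neighborSet w))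
    calc {v | G.Reachable u v ∧ G.dist u v ≤ r + 1}.ncard
        ≤ (⋃ w ∈ {v | G.Reachable u v ∧ G.dist u v ≤ r},
            insert w (G.neighborSet w)).ncard := Set.ncard_le_ncard hsub (Set.toFinite _)
      _ ≤ {v | G.Reachable u v ∧ G.dist u v ≤ r}.ncard * (d + 1) :=
          aux_ncard_biUnion_le (Set.toFinite _) _ _
            (fun w _ => le_trans (Set.ncard_insert_le _ _) (by have := hd w; omega))
      _ ≤ (d + 1) ^ r * (d + 1) := Nat.mul_le_mul_right _ (ih u)
      _ = (d + 1) ^ (r + 1) := (pow_succ _ _).symm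

lemma aux_sym2_ncard {α : Type*} [Finite α] (e : Sym2 α) : {w | w ∈ e}.ncard ≤ 2 := by
  induction e using Sym2.ind with
  | _ a b =>
    have hsub : {w | w ∈ s(a, b)} ⊆ {a, b} := by
      intro w hw
      rcases Sym2.mem_iff.mp hw with h1 | h1 <;> simp [h1]
    exact le_trans (Set.ncard_le_ncard hsub (Set.toFinite _))
      (le_trans (Set.ncard_insert_le _ _) (by simp))

lemma aux_incidence_ncard {α : Type*} [Finite α] (G : SimpleGraph α) (x : α) :
    (G.incidenceSet x).ncard = (G.neighborSet x).ncard := by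
  classical
  rw [← Nat.card_coe_set_eq, ← Nat.card_coe_set_eq]
  exact Nat.card_congr (G.incidenceSetEquivNeighborSet x)

end Aux

/-- Hyperfiniteness is preserved by bi-Lipschitz equivalence of graph sequences. -/
theorem stmt3 {V : ℕ → Type} (Gs Gs' : GraphSeq V)
    (h : Gs.equivSeq Gs') (hh : Gs.hyperfinite) : Gs'.hyperfinite := by
  classical
  obtain ⟨L, hL, hbil⟩ := h
  intro ε hε
  set C : ℕ := 2 * (Gs.degBound + 1) ^ L * (Gs'.degBound + 1) with hCdef
  have hCpos : 0 < C := by positivity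
  have hCR : (0 : ℝ) < (C : ℝ) := by exact_mod_cast hCpos
  have hε' : 0 < ε / (2 * C) := by positivity
  obtain ⟨K, hK, E, hEsub, hElim, hEcomp⟩ := hh (ε / (2 * C)) hε'
  set E' : ∀ n, Set (Sym2 (V n)) := fun n =>
    {e | e ∈ (Gs'.G n).edgeSet ∧
      ∃ x y, e = s(x, y) ∧ ¬((Gs.G n).deleteEdges (E n)).Reachable x y} with hE'def
  refine ⟨K, hK, E', fun n e he => he.1, ?_, ?_⟩
  · -- limsup bound
    have key : ∀ n, (E' n).ncard ≤ C * (E n).ncard := by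
      intro n
      haveI := Gs.finite n
      set D : Set (V n) := ⋃ e ∈ E n, {w | w ∈ e} with hDdef
      set A : Set (V n) := ⋃ w ∈ D,
        {v | (Gs.G n).Reachable w v ∧ (Gs.G n).dist w v ≤ L} with hAdef
      have hD : D.ncard ≤ (E n).ncard * 2 := by
        exact aux_ncard_biUnion_le (Set.toFinite _) _ _ (fun e _ => aux_sym2_ncard e)
      have hA : A.ncard ≤ D.ncard * (Gs.degBound + 1) ^ L :=
        aux_ncard_biUnion_le (Set.toFinite _) _ _
          (fun w _ => aux_ball_ncard (Gs.G n) Gs.degBound (Gs.deg_le n) L w)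
      have hE'sub : E' n ⊆ ⋃ x ∈ A, (Gs'.G n).incidenceSet x := by
        rintro e ⟨hedge, x, y, rfl, hnr⟩
        have hadj : (Gs'.G n).Adj x y := hedge
        have hd1 : (Gs'.G n).dist x y = 1 := SimpleGraph.dist_eq_one_iff_adj.mpr hadj
        have hdist : (Gs.G n).dist x y ≤ L := by
          have h2 := (hbil n x y).2
          rw [hd1, mul_one] at h2
          exact h2
        obtain ⟨p, hp⟩ := ((Gs.connected n).preconnected x y).exists_walk_length_eq_dist
        have hexists : ∃ e0, e0 ∈ p.edges ∧ e0 ∈ E n := by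
          by_contra hc
          push_neg at hc
          exact hnr (p.toDeleteEdges (E n) hc).reachable
        obtain ⟨u, v, he0p, he0E⟩ := Sym2.exists.mp hexists
        have hu : u ∈ p.support := p.fst_mem_support_of_mem_edges he0p
        have hxu : (Gs.G n).dist x u ≤ L := by
          have h1 : (Gs.G n).dist x u ≤ (p.takeUntil u hu).length :=
            SimpleGraph.dist_le _
          have h2 := SimpleGraph.Walk.length_takeUntil_le p hu
          omega
        have hxA : x ∈ A := by
          refine Set.mem_biUnion (show u ∈ D from ?_) ?_
          · exact Set.mem_biUnion he0E (Sym2.mem_mk_left u v)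
          · exact ⟨(Gs.connected n).preconnected u x,
              by rw [SimpleGraph.dist_comm]; exact hxu⟩
        exact Set.mem_biUnion hxA ⟨hedge, Sym2.mem_mk_left x y⟩
      calc (E' n).ncard
          ≤ (⋃ x ∈ A, (Gs'.G n).incidenceSet x).ncard :=
            Set.ncard_le_ncard hE'sub (Set.toFinite _)
        _ ≤ A.ncard * (Gs'.degBound + 1) :=
            aux_ncard_biUnion_le (Set.toFinite _) _ _
              (fun x _ => by
                rw [aux_incidence_ncard]
                have := Gs'.deg_le n x
                omega)
        _ ≤ ((E n).ncard * 2) * (Gs.degBound + 1) ^ L * (Gs'.degBound + 1) := by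
            have := Nat.mul_le_mul_right ((Gs.degBound + 1) ^ L) hD
            exact Nat.mul_le_mul_right _ (le_trans hA this)
        _ = C * (E n).ncard := by ring
    have hnonneg : ∀ n, (0 : ℝ) ≤ ((E' n).ncard : ℝ) / (Nat.card (V n) : ℝ) := by
      intro n
      positivity
    have hcob : IsCoboundedUnder (· ≤ ·) atTop
        (fun n => ((E' n).ncard : ℝ) / (Nat.card (V n) : ℝ)) :=
      by
        have hbd : Filter.IsBoundedUnder (· ≥ ·) atTop
            (fun n => ((E' n).ncard : ℝ) / (Nat.card (V n) : ℝ)) :=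
          Filter.isBoundedUnder_of ⟨0, fun n => hnonneg n⟩
        exact hbd.isCoboundedUnder_le
    have hev : ∀ᶠ n in atTop, ((E n).ncard : ℝ) / (Nat.card (V n) : ℝ) < ε / (2 * C) := by
      refine Filter.eventually_lt_of_limsup_lt hElim ?_
      refine Filter.isBoundedUnder_of ⟨(Gs.degBound + 1 : ℝ), fun n => ?_⟩
      haveI := Gs.finite n
      haveI : Nonempty (V n) := (Gs.connected n).nonempty
      have hcard : (0 : ℝ) < (Nat.card (V n) : ℝ) := by exact_mod_cast Nat.card_pos
      have hsub2 : E n ⊆ ⋃ x ∈ (Set.univ : Set (V n)), (Gs.G n).incidenceSet x := by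
        intro e he
        obtain ⟨x, y, hxy, heE⟩ := Sym2.exists.mp
          (⟨e, rfl, hEsub n he⟩ : ∃ e', e = e' ∧ e' ∈ (Gs.G n).edgeSet)
        subst hxy
        exact Set.mem_biUnion (Set.mem_univ x) ⟨heE, Sym2.mem_mk_left x y⟩
      have hcount : (E n).ncard ≤ Nat.card (V n) * (Gs.degBound + 1) := by
        calc (E n).ncard ≤ (⋃ x ∈ (Set.univ : Set (V n)), (Gs.G n).incidenceSet x).ncard :=
              Set.ncard_le_ncard hsub2 (Set.toFinite _)
          _ ≤ (Set.univ : Set (V n)).ncard * (Gs.degBound + 1) :=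
              aux_ncard_biUnion_le (Set.toFinite _) _ _
                (fun x _ => by
                  rw [aux_incidence_ncard]
                  have := Gs.deg_le n x
                  omega)
          _ = Nat.card (V n) * (Gs.degBound + 1) := by rw [Set.ncard_univ]
      rw [div_le_iff₀ hcard]
      calc ((E n).ncard : ℝ) ≤ ((Nat.card (V n) * (Gs.degBound + 1) : ℕ) : ℝ) := by
            exact_mod_cast hcount
        _ = (Gs.degBound + 1 : ℝ) * (Nat.card (V n) : ℝ) := by push_cast; ring
    have hev2 : ∀ᶠ n in atTop,
        ((E' n).ncard : ℝ) / (Nat.card (V n) : ℝ) ≤ ε / 2 := by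
      filter_upwards [hev] with n hn
      haveI := Gs.finite n
      haveI : Nonempty (V n) := (Gs.connected n).nonempty
      have hcard : (0 : ℝ) < (Nat.card (V n) : ℝ) := by
        exact_mod_cast Nat.card_pos
      have h1 : ((E' n).ncard : ℝ) / (Nat.card (V n) : ℝ) ≤
          (C : ℝ) * (((E n).ncard : ℝ) / (Nat.card (V n) : ℝ)) := by
        rw [mul_div_assoc']
        gcongr
        exact_mod_cast key n
      have h2 : (C : ℝ) * (((E n).ncard : ℝ) / (Nat.card (V n) : ℝ)) ≤
          (C : ℝ) * (ε / (2 * C)) := by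
        apply mul_le_mul_of_nonneg_left (le_of_lt hn) (le_of_lt hCR)
      have h3 : (C : ℝ) * (ε / (2 * C)) = ε / 2 := by
        field_simp
      linarith
    calc limsup (fun n => ((E' n).ncard : ℝ) / (Nat.card (V n) : ℝ)) atTop
        ≤ ε / 2 := limsup_le_of_le hcob hev2
      _ < ε := by linarith
  · -- component bound
    intro n x
    haveI := Gs.finite n
    refine le_trans (Set.ncard_le_ncard ?_ (Set.toFinite _)) (hEcomp n x)
    intro y hy
    obtain ⟨p⟩ := hy
    induction p with
    | nil => exact SimpleGraph.Reachable.refl _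
    | cons hadj q ih =>
      rename_i a b c
      rw [SimpleGraph.deleteEdges_adj] at hadj
      obtain ⟨hadj', hnot⟩ := hadj
      have hreach : ((Gs.G n).deleteEdges (E n)).Reachable a b := by
        by_contra hc
        exact hnot ⟨hadj', a, b, rfl, hc⟩
      exact hreach.trans ih
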